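/- If F is a forest, then D(F, -1) ∈ {1, -1}. In particular D(P_n, -1) ∈ {1, -1} for all n ≥ 1. -/

import Mathlib

open SimpleGraph Polynomial Finset

open Classical in
/-- The number of dominating sets of `G` of cardinality `i`. -/
noncomputable def domCount {V : Type*} [Fintype V] [DecidableEq V]
    (G : SimpleGraph V) (i : ℕ) : ℕ :=
  (Finset.univ.filter fun S : Finset V =>
    S.card = i ∧ ∀ v : V, v ∈ S ∨ ∃ u ∈ S, G.Adj u v).card

/-- The domination polynomial of `G`. -/
noncomputable def domPoly {V : Type*} [Fintype V] [DecidableEq V]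
    (G : SimpleGraph V) : Polynomial ℤ :=
  ∑ i ∈ Finset.range (Fintype.card V + 1), Polynomial.C (domCount G i : ℤ) * Polynomial.X ^ i

/-- The domination number of `G`. -/
noncomputable def domNum {V : Type*} [Fintype V] [DecidableEq V] (G : SimpleGraph V) : ℕ :=
  sInf {i | ∃ S : Finset V, S.card = i ∧ ∀ v : V, v ∈ S ∨ ∃ u ∈ S, G.Adj u v}

open Classical in
/-- Signed sum over dominating sets. -/
noncomputable def domSum {V : Type*} [Fintype V] [DecidableEq V] (G : SimpleGraph V) : ℤ :=
  ∑ S ∈ Finset.univ.filter (fun S : Finset V => ∀ v : V, v ∈ S ∨ ∃ u ∈ S, G.Adj u v),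
    (-1 : ℤ) ^ S.card

open Classical in
lemma domPoly_eval_neg_one {V : Type*} [Fintype V] [DecidableEq V] (G : SimpleGraph V) :
    (domPoly G).eval (-1) = domSum G := by
  classical
  have h : ∀ S : Finset V, S ∈ Finset.univ.filter
      (fun S : Finset V => ∀ v : V, v ∈ S ∨ ∃ u ∈ S, G.Adj u v) →
      S.card ∈ Finset.range (Fintype.card V + 1) := by
    intro S _
    simp [Nat.lt_succ_iff, Finset.card_le_univ]
  rw [domSum, ← Finset.sum_fiberwise_of_maps_to h (fun S => (-1 : ℤ) ^ S.card)]
  rw [domPoly, Polynomial.eval_finset_sum]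
  refine Finset.sum_congr rfl fun i _ => ?_
  rw [Finset.filter_filter]
  have : (Finset.univ.filter fun S : Finset V =>
      (∀ v : V, v ∈ S ∨ ∃ u ∈ S, G.Adj u v) ∧ S.card = i) =
      (Finset.univ.filter fun S : Finset V =>
      S.card = i ∧ ∀ v : V, v ∈ S ∨ ∃ u ∈ S, G.Adj u v) := by
    apply Finset.filter_congr
    intro S _
    exact and_comm
  rw [this]
  have hsum : ∑ S ∈ (Finset.univ.filter fun S : Finset V =>
      S.card = i ∧ ∀ v : V, v ∈ S ∨ ∃ u ∈ S, G.Adj u v), (-1 : ℤ) ^ S.card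
      = (domCount G i : ℤ) * (-1) ^ i := by
    rw [domCount, Finset.card_eq_sum_ones, Nat.cast_sum]
    rw [Finset.sum_mul]
    refine Finset.sum_congr rfl fun S hS => ?_
    have : S.card = i := (Finset.mem_filter.mp hS).2.1
    simp [this]
  rw [hsum]
  simp

/-- Membership in a set closed under adjacency is preserved by reachability. -/
lemma reachable_closed {α : Type*} (H : SimpleGraph α) (s : Set α)
    (hs : ∀ x y, H.Adj x y → x ∈ s → y ∈ s) {x y : α} (h : H.Reachable x y) :
    x ∈ s → y ∈ s := by
  obtain ⟨w⟩ := h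
  induction w with
  | nil => exact id
  | cons h p ih => exact fun hx => ih (hs _ _ h hx)

lemma pathGraph_isAcyclic (n : ℕ) : (pathGraph n).IsAcyclic := by
  rw [isAcyclic_iff_forall_adj_isBridge]
  intro u v huv
  have key : ∀ a b : Fin n, (a : ℕ) + 1 = (b : ℕ) →
      ¬((pathGraph n) \ fromEdgeSet {s(a, b)}).Reachable a b := by
    intro a b hab hr
    have := reachable_closed _ {w : Fin n | (w : ℕ) ≤ (a : ℕ)} ?_ hr
      (show (a : ℕ) ≤ (a : ℕ) from le_refl _)
    · simp only [Set.mem_setOf_eq] at this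
      omega
    · intro x y hxy hx
      simp only [Set.mem_setOf_eq] at hx ⊢
      rw [SimpleGraph.sdiff_adj] at hxy
      obtain ⟨hadj, hne⟩ := hxy
      rw [pathGraph_adj] at hadj
      rcases hadj with h1 | h2
      · -- x + 1 = y
        rcases lt_or_eq_of_le hx with h | h
        · omega
        · exfalso
          apply hne
          have hxa : x = a := Fin.ext h
          have hyb : y = b := Fin.ext (by omega)
          rw [hxa, hyb, fromEdgeSet_adj]
          exact ⟨rfl, fun hh => by rw [hh] at hab; omega⟩
      · omega
  rw [isBridge_iff]
  show ¬((pathGraph n) \ fromEdgeSet {s(u, v)}).Reachable u v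
  rw [pathGraph_adj] at huv
  rcases huv with h | h
  · exact key u v h
  · intro hr
    have hs : s(u, v) = s(v, u) := Sym2.eq_swap
    rw [hs] at hr
    exact key v u h hr.symm

lemma isAcyclic_induce {V : Type*} {G : SimpleGraph V} (h : G.IsAcyclic) (s : Set V) :
    (G.induce s).IsAcyclic := by
  intro v c hc
  exact h (c.map (SimpleGraph.Embedding.induce (G := G) s).toHom)
    (hc.map (SimpleGraph.Embedding.induce (G := G) s).injective)

/-- An acyclic graph with an edge has a leaf. -/
lemma exists_leaf {V : Type*} [Fintype V] {G : SimpleGraph V} (hG : G.IsAcyclic)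
    {x y : V} (hxy : G.Adj x y) :
    ∃ a b : V, G.Adj a b ∧ ∀ w, G.Adj a w → w = b := by
  classical
  set P : ℕ → Prop := fun k => ∃ (u v : V) (p : G.Walk u v), p.IsPath ∧ p.length = k with hP
  set N := Fintype.card V with hN
  have hNpos : 1 ≤ N := Fintype.card_pos_iff.mpr ⟨x⟩
  have hP1 : P 1 := ⟨x, y, Walk.cons hxy Walk.nil, by simp [Walk.cons_isPath_iff, hxy.ne], rfl⟩
  set k := Nat.findGreatest P N with hk
  have hPk : P k := Nat.findGreatest_spec hNpos hP1
  have hk1 : 1 ≤ k := Nat.le_findGreatest hNpos hP1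
  have hmax : ∀ (w z : V) (q : G.Walk w z), q.IsPath → q.length ≤ k := by
    intro w z q hq
    by_contra hlen
    push_neg at hlen
    exact Nat.findGreatest_is_greatest hlen (le_of_lt hq.length_lt) ⟨w, z, q, hq, rfl⟩
  obtain ⟨u, v, p, hp, hlen⟩ := hPk
  have hplen : 0 < p.length := by omega
  refine ⟨u, p.getVert 1, by simpa [Walk.getVert_zero] using p.adj_getVert_succ hplen, ?_⟩
  intro w hw
  have hws : w ∈ p.support := by
    by_contra hws
    have : (Walk.cons hw.symm p).IsPath := (Walk.cons_isPath_iff _ _).mpr ⟨hp, hws⟩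
    have := hmax _ _ _ this
    simp [Walk.length_cons, hlen] at this
  have hq : p.takeUntil w hws = Walk.cons hw Walk.nil := by
    have := hG.path_unique ⟨p.takeUntil w hws, hp.takeUntil hws⟩ (SimpleGraph.Path.singleton hw)
    simpa [SimpleGraph.Path.singleton, Subtype.ext_iff] using this
  have hspec := p.take_spec hws
  have : p.getVert 1 = w := by
    conv_lhs => rw [← hspec]
    rw [Walk.getVert_append, hq]
    simp [Walk.getVert_zero]
  exact this.symm

open Classical in
lemma domSum_leaf {V : Type*} [Fintype V] [DecidableEq V] (G : SimpleGraph V)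
    {a b : V} (hab : G.Adj a b) (hu : ∀ w, G.Adj a w → w = b) :
    domSum G = - domSum (G.induce {w : V | w ≠ a ∧ w ≠ b}) := by
  classical
  have hba : b ≠ a := hab.ne'
  set pr : V → Prop := fun w => w ≠ a ∧ w ≠ b with hpr
  set p : Finset V → Prop := fun S => ∀ v : V, v ∈ S ∨ ∃ u ∈ S, G.Adj u v with hp
  have hsplit := Finset.sum_filter_add_sum_filter_not (Finset.univ.filter p)
    (fun S => b ∈ S) (fun S : Finset V => (-1 : ℤ) ^ S.card)
  -- Part A : sum over dominating sets containing b is zero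
  have hA : ∑ S ∈ (Finset.univ.filter p).filter (fun S => b ∈ S), (-1 : ℤ) ^ S.card = 0 := by
    set t := (Finset.univ.filter p).filter (fun S => b ∈ S) with ht
    have hmem' : ∀ S : Finset V, S ∈ t ↔ p S ∧ b ∈ S := by
      intro S
      simp [ht, Finset.mem_filter]
    set g : ∀ S : Finset V, S ∈ t → Finset V :=
      fun S _ => if a ∈ S then S.erase a else insert a S with hg
    have hgmem : ∀ S hS, g S hS ∈ t := by
      intro S hS
      obtain ⟨hSp, hbS⟩ := (hmem' S).mp hS
      rw [hmem']
      by_cases ha : a ∈ S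
      · rw [hg]
        simp only [ha, if_true]
        refine ⟨?_, Finset.mem_erase.mpr ⟨hba, hbS⟩⟩
        intro v
        rcases hSp v with hv | ⟨u, huS, huv⟩
        · by_cases hva : v = a
          · subst hva
            exact Or.inr ⟨b, Finset.mem_erase.mpr ⟨hba, hbS⟩, hab.symm⟩
          · exact Or.inl (Finset.mem_erase.mpr ⟨hva, hv⟩)
        · by_cases hua : u = a
          · subst hua
            have hvb : v = b := hu v huv
            subst hvb
            exact Or.inl (Finset.mem_erase.mpr ⟨hba, hbS⟩)
          · exact Or.inr ⟨u, Finset.mem_erase.mpr ⟨hua, huS⟩, huv⟩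
      · rw [hg]
        simp only [ha, if_false]
        refine ⟨?_, Finset.mem_insert_of_mem hbS⟩
        intro v
        rcases hSp v with hv | ⟨u, huS, huv⟩
        · exact Or.inl (Finset.mem_insert_of_mem hv)
        · exact Or.inr ⟨u, Finset.mem_insert_of_mem huS, huv⟩
    refine Finset.sum_involution g ?_ ?_ hgmem ?_
    · intro S hS
      by_cases ha : a ∈ S
      · rw [hg]
        simp only [ha, if_true]
        have h1 : (S.erase a).card + 1 = S.card := Finset.card_erase_add_one ha
        rw [← h1, pow_succ]
        ring
      · rw [hg]
        simp only [ha, if_false]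
        rw [Finset.card_insert_of_notMem ha, pow_succ]
        ring
    · intro S hS _
      by_cases ha : a ∈ S
      · rw [hg]
        simp only [ha, if_true]
        rw [Ne, Finset.erase_eq_self]
        exact fun h => h ha
      · rw [hg]
        simp only [ha, if_false]
        rw [Ne, Finset.insert_eq_self]
        exact ha
    · intro S hS
      by_cases ha : a ∈ S
      · simp [hg, ha, Finset.insert_erase ha]
      · simp [hg, ha, Finset.erase_insert ha]
  -- Part B
  have haS : ∀ S : Finset V, p S → b ∉ S → a ∈ S := by
    intro S hSp hbS
    rcases hSp a with h | ⟨u, huS, hua⟩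
    · exact h
    · exact absurd (hu u hua.symm ▸ huS) (by rwa [hu u hua.symm] at huS)
  have hB : ∑ S ∈ (Finset.univ.filter p).filter (fun S => b ∉ S), (-1 : ℤ) ^ S.card
      = - domSum (G.induce {w : V | w ≠ a ∧ w ≠ b}) := by
    rw [domSum, ← Finset.sum_neg_distrib]
    refine Finset.sum_bij'
      (fun S _ => (S.erase a).subtype (fun w : V => w ∈ {w : V | w ≠ a ∧ w ≠ b}))
      (fun S' _ => insert a (S'.map (Function.Embedding.subtype _))) ?_ ?_ ?_ ?_ ?_
    · -- hi
      intro S hS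
      simp only [Finset.mem_filter, Finset.mem_univ, true_and] at hS ⊢
      obtain ⟨hSp, hbS⟩ := hS
      intro x
      obtain ⟨xa, xb⟩ := x.2
      rcases hSp x.1 with hv | ⟨y, hyS, hyx⟩
      · exact Or.inl (Finset.mem_subtype.mpr (Finset.mem_erase.mpr ⟨xa, hv⟩))
      · have hya : y ≠ a := by
          rintro rfl
          exact xb (hu _ hyx)
        have hyb : y ≠ b := fun h => hbS (h ▸ hyS)
        exact Or.inr ⟨⟨y, ⟨hya, hyb⟩⟩,
          Finset.mem_subtype.mpr (Finset.mem_erase.mpr ⟨hya, hyS⟩), hyx⟩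
    · -- hj
      intro S' hS'
      simp only [Finset.mem_filter, Finset.mem_univ, true_and] at hS' ⊢
      constructor
      · intro x
        by_cases hxa : x = a
        · subst hxa
          exact Or.inl (Finset.mem_insert_self x _)
        by_cases hxb : x = b
        · subst hxb
          exact Or.inr ⟨a, Finset.mem_insert_self a _, hab⟩
        · rcases hS' ⟨x, ⟨hxa, hxb⟩⟩ with hv | ⟨y, hyS, hyx⟩
          · exact Or.inl (Finset.mem_insert_of_mem (Finset.mem_map.mpr ⟨_, hv, rfl⟩))
          · exact Or.inr ⟨y.1, Finset.mem_insert_of_mem (Finset.mem_map.mpr ⟨y, hyS, rfl⟩), hyx⟩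
      · intro hbmem
        rcases Finset.mem_insert.mp hbmem with h | h
        · exact hba h
        · obtain ⟨w, hw, hwb⟩ := Finset.mem_map.mp h
          exact w.2.2 hwb
    · -- left_inv
      intro S hS
      simp only [Finset.mem_filter, Finset.mem_univ, true_and] at hS
      obtain ⟨hSp, hbS⟩ := hS
      have haS' : a ∈ S := haS S hSp hbS
      rw [Finset.subtype_map]
      have hft : (S.erase a).filter (fun w => w ∈ {w : V | w ≠ a ∧ w ≠ b}) = S.erase a := by
        apply Finset.filter_true_of_mem
        intro w hw
        exact ⟨(Finset.mem_erase.mp hw).1, fun h => hbS (h ▸ Finset.mem_of_mem_erase hw)⟩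
      rw [hft, Finset.insert_erase haS']
    · -- right_inv
      intro S' hS'
      have hnot : a ∉ S'.map (Function.Embedding.subtype _) := by
        intro h
        obtain ⟨w, hw, hwa⟩ := Finset.mem_map.mp h
        exact w.2.1 hwa
      rw [Finset.erase_insert hnot]
      ext x
      simp only [Finset.mem_subtype, Finset.mem_map, Function.Embedding.coe_subtype]
      constructor
      · rintro ⟨w, hw, hwx⟩
        exact (Subtype.coe_injective hwx) ▸ hw
      · intro hx
        exact ⟨x, hx, rfl⟩
    · -- values
      intro S hS
      simp only [Finset.mem_filter, Finset.mem_univ, true_and] at hS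
      obtain ⟨hSp, hbS⟩ := hS
      have haS' : a ∈ S := haS S hSp hbS
      have hcard : ((S.erase a).subtype (fun w => w ∈ {w : V | w ≠ a ∧ w ≠ b})).card
          = (S.erase a).card := by
        rw [← Finset.card_map (Function.Embedding.subtype _), Finset.subtype_map]
        congr 1
        apply Finset.filter_true_of_mem
        intro w hw
        exact ⟨(Finset.mem_erase.mp hw).1, fun h => hbS (h ▸ Finset.mem_of_mem_erase hw)⟩
      have h1 : (S.erase a).card + 1 = S.card := Finset.card_erase_add_one haS'
      rw [hcard, ← h1, pow_succ]
      ring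
  have hd : domSum G = ∑ S ∈ Finset.univ.filter p, (-1 : ℤ) ^ S.card := rfl
  rw [hd, ← hsplit, hA, hB, zero_add]

lemma domSum_acyclic (n : ℕ) : ∀ (V : Type) [Fintype V] [DecidableEq V]
    (G : SimpleGraph V), Fintype.card V = n → G.IsAcyclic →
    domSum G = 1 ∨ domSum G = -1 := by
  induction n using Nat.strong_induction_on with
  | _ n ih =>
  intro V _ _ G hcard hG
  by_cases hE : ∃ x y : V, G.Adj x y
  · obtain ⟨x, y, hxy⟩ := hE
    obtain ⟨a, b, hab, hu⟩ := exists_leaf hG hxy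
    rw [domSum_leaf G hab hu]
    have hne : a ≠ b := hab.ne
    have hcards : Fintype.card ↥{w : V | w ≠ a ∧ w ≠ b} = n - 2 := by
      classical
      rw [Fintype.card_subtype]
      have : Finset.univ.filter (fun w : V => w ∈ {w : V | w ≠ a ∧ w ≠ b})
          = Finset.univ \ {a, b} := by
        ext w
        simp [Set.mem_setOf_eq, not_or]
      rw [this, Finset.card_sdiff_of_subset (Finset.subset_univ _), Finset.card_univ, hcard,
        Finset.card_insert_of_notMem (by simp [hne]), Finset.card_singleton]
    have hn2 : 2 ≤ n := by
      have : ({a, b} : Finset V).card ≤ Fintype.card V := by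
        rw [← Finset.card_univ]
        exact Finset.card_le_card (Finset.subset_univ _)
      rw [Finset.card_insert_of_notMem (by simp [hne]), Finset.card_singleton] at this
      omega
    have hlt : n - 2 < n := by omega
    rcases ih (n - 2) hlt ↥{w : V | w ≠ a ∧ w ≠ b} (G.induce _) hcards
      (isAcyclic_induce hG _) with h | h
    · rw [h]
      right
      ring
    · rw [h]
      left
      ring
  · push_neg at hE
    have hdom : ∀ S : Finset V, (∀ v : V, v ∈ S ∨ ∃ u ∈ S, G.Adj u v) ↔ S = Finset.univ := by
      intro S
      constructor
      · intro h
        apply Finset.eq_univ_of_forall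
        intro v
        rcases h v with hv | ⟨u, _, huv⟩
        · exact hv
        · exact absurd huv (hE u v)
      · rintro rfl v
        exact Or.inl (Finset.mem_univ v)
    have hd : domSum G = (-1 : ℤ) ^ n := by
      classical
      have hd0 : domSum G = ∑ S ∈ Finset.univ.filter
          (fun S : Finset V => ∀ v : V, v ∈ S ∨ ∃ u ∈ S, G.Adj u v), (-1 : ℤ) ^ S.card := rfl
      have hfilter : Finset.univ.filter
          (fun S : Finset V => ∀ v : V, v ∈ S ∨ ∃ u ∈ S, G.Adj u v) = {Finset.univ} := by
        ext S
        simp only [Finset.mem_filter, Finset.mem_univ, true_and, Finset.mem_singleton]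
        exact hdom S
      rw [hd0, hfilter, Finset.sum_singleton, Finset.card_univ, hcard]
    rw [hd]
    rcases Nat.even_or_odd n with h | h
    · left; exact h.neg_one_pow
    · right; exact h.neg_one_pow

theorem domPoly_forest_neg_one :
    (∀ (V : Type) (_ : Fintype V) (_ : DecidableEq V) (F : SimpleGraph V), F.IsAcyclic →
      (domPoly F).eval (-1) = 1 ∨ (domPoly F).eval (-1) = -1) ∧
    (∀ n : ℕ, 1 ≤ n →
      (domPoly (pathGraph n)).eval (-1) = 1 ∨ (domPoly (pathGraph n)).eval (-1) = -1) := by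
  constructor
  · intro V _ _ F hF
    rw [domPoly_eval_neg_one]
    exact domSum_acyclic (Fintype.card V) V F rfl hF
  · intro n _
    rw [domPoly_eval_neg_one]
    exact domSum_acyclic (Fintype.card (Fin n)) (Fin n) (pathGraph n) rfl
      (pathGraph_isAcyclic n)
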